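/- Let k ∈ ℕ, r ∈ ℝ with r ≥ 0, and let P be a finite subset of ℝ^d (with distances measured by an arbitrary norm) such that P is covered by k closed balls of radius r and |P| > k. Then there exist two distinct points p, q ∈ P with ‖p - q‖ ≤ 4r·(k/|P|)^(1/d). -/

import Mathlib

open MeasureTheory Metric
open scoped ENNReal NNReal

theorem stmt_0 {E : Type*} [NormedAddCommGroup E] [NormedSpace ℝ E] [FiniteDimensional ℝ E]
    {d k : ℕ} (hd : Module.finrank ℝ E = d) (hd0 : 0 < d)
    {r : ℝ} (hr : 0 ≤ r) (P : Finset E)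
    (y : Fin k → E) (hcover : (P : Set E) ⊆ ⋃ i, Metric.closedBall (y i) r)
    (hP : k < P.card) :
    ∃ p ∈ P, ∃ q ∈ P, p ≠ q ∧
      dist p q ≤ 4 * r * ((k : ℝ) / (P.card : ℝ)) ^ (1 / (d : ℝ)) := by
  by_contra hcon
  push_neg at hcon
  have hk : 0 < k := by
    rcases Nat.eq_zero_or_pos k with hk0 | hk0
    · subst hk0
      have : P = ∅ := Finset.coe_eq_empty.mp (Set.subset_empty_iff.mp (by simpa using hcover))
      simp [this] at hP
    · exact hk0
  have hn : 0 < P.card := lt_of_le_of_lt (Nat.zero_le k) hP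
  set n := P.card with hn_def
  set t : ℝ := ((k : ℝ) / (n : ℝ)) ^ (1 / (d : ℝ)) with ht_def
  have hn0R : (0:ℝ) < (n:ℝ) := by exact_mod_cast hn
  have hk0R : (0:ℝ) < (k:ℝ) := by exact_mod_cast hk
  have ht0 : 0 < t := Real.rpow_pos_of_pos (div_pos hk0R hn0R) _
  -- choose a covering ball for each point
  have hex : ∀ p : E, ∃ i : Fin k, p ∈ P → p ∈ closedBall (y i) r := by
    intro p
    by_cases hp : p ∈ P
    · obtain ⟨i, hi⟩ := Set.mem_iUnion.mp (hcover hp)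
      exact ⟨i, fun _ => hi⟩
    · exact ⟨⟨0, hk⟩, fun h => absurd h hp⟩
  choose f hf using hex
  -- pigeonhole: two points in the same ball
  obtain ⟨p, hp, q, hq, hpq, hfpq⟩ :=
    Finset.exists_ne_map_eq_of_card_lt_of_maps_to (t := (Finset.univ : Finset (Fin k)))
      (by simpa using hP) (fun a _ => Finset.mem_univ (f a))
  have hpq2r : dist p q ≤ 2 * r := by
    have h1 := hf p hp
    have h2 := hf q hq
    rw [hfpq] at h1
    have h1' : dist p (y (f q)) ≤ r := mem_closedBall.mp h1
    have h2' : dist (y (f q)) q ≤ r := by rw [dist_comm]; exact mem_closedBall.mp h2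
    calc dist p q ≤ dist p (y (f q)) + dist (y (f q)) q := dist_triangle _ _ _
      _ ≤ 2 * r := by linarith
  have hδ2r : 4 * r * t < 2 * r := lt_of_lt_of_le (hcon p hp q hq hpq) hpq2r
  have hr0 : 0 < r := by nlinarith
  have hhalf : 2 * r * t < r := by linarith
  -- volume argument
  borelize E
  set μ : Measure E := Measure.addHaar with hμ
  set V := μ (ball (0:E) 1) with hV
  have hV0 : V ≠ 0 := (measure_ball_pos μ 0 one_pos).ne'
  have hVtop : V ≠ ⊤ := measure_ball_lt_top.ne
  have hball : ∀ (x : E) (s : ℝ), 0 ≤ s →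
      μ (closedBall x s) = ENNReal.ofReal (s ^ d) * V := by
    intro x s hs
    rw [hμ, Measure.addHaar_closedBall _ _ hs, hd]
  have hdisj : (P : Set E).PairwiseDisjoint fun p => closedBall p (2*r*t) := by
    intro a ha b hb hab
    apply closedBall_disjoint_closedBall
    have := hcon a ha b hb hab
    linarith
  have hsum : μ (⋃ p ∈ P, closedBall p (2*r*t)) = ∑ p ∈ P, μ (closedBall p (2*r*t)) :=
    measure_biUnion_finset hdisj fun p _ => measurableSet_closedBall
  have hsub : (⋃ p ∈ P, closedBall p (2*r*t)) ⊆ ⋃ i, closedBall (y i) (r + 2*r*t) := by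
    refine Set.iUnion₂_subset fun p hp => ?_
    refine Set.subset_iUnion_of_subset (f p) ?_
    apply closedBall_subset_closedBall'
    have : dist p (y (f p)) ≤ r := mem_closedBall.mp (hf p hp)
    linarith
  have h1 : ∑ p ∈ P, μ (closedBall p (2*r*t))
      = (n : ℝ≥0∞) * (ENNReal.ofReal ((2*r*t)^d) * V) := by
    rw [Finset.sum_congr rfl fun p _ => hball p _ (by positivity), Finset.sum_const,
      nsmul_eq_mul]
  have h2 : μ (⋃ i, closedBall (y i) (r+2*r*t))
      ≤ (k : ℝ≥0∞) * (ENNReal.ofReal ((r+2*r*t)^d) * V) := by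
    refine le_trans (measure_iUnion_fintype_le μ _) ?_
    rw [Finset.sum_congr rfl fun i _ => hball (y i) _ (by positivity), Finset.sum_const,
      nsmul_eq_mul, Finset.card_univ, Fintype.card_fin]
  have key : (n : ℝ≥0∞) * (ENNReal.ofReal ((2*r*t)^d) * V)
      ≤ (k : ℝ≥0∞) * (ENNReal.ofReal ((r+2*r*t)^d) * V) := by
    rw [← h1, ← hsum]
    exact le_trans (measure_mono hsub) h2
  have key2 : (n : ℝ≥0∞) * ENNReal.ofReal ((2*r*t)^d)
      ≤ (k : ℝ≥0∞) * ENNReal.ofReal ((r+2*r*t)^d) := by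
    rw [← mul_assoc, ← mul_assoc] at key
    exact (ENNReal.mul_le_mul_iff_left hV0 hVtop).mp key
  have key3 : (n : ℝ) * (2*r*t)^d ≤ (k : ℝ) * (r+2*r*t)^d := by
    rw [show ((n : ℝ≥0∞)) = ENNReal.ofReal (n : ℝ) by simp,
      show ((k : ℝ≥0∞)) = ENNReal.ofReal (k : ℝ) by simp,
      ← ENNReal.ofReal_mul (by positivity), ← ENNReal.ofReal_mul (by positivity)] at key2
    exact (ENNReal.ofReal_le_ofReal_iff (by positivity)).mp key2
  have htd : t ^ d = (k : ℝ) / (n : ℝ) := by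
    rw [ht_def, ← Real.rpow_natCast (((k:ℝ)/(n:ℝ)) ^ (1/(d:ℝ))) d,
      ← Real.rpow_mul (by positivity), one_div_mul_cancel (by exact_mod_cast hd0.ne'),
      Real.rpow_one]
  have heq : (n : ℝ) * (2*r*t)^d = (k : ℝ) * (2*r)^d := by
    rw [show (2*r*t) = (2*r)*t by ring, mul_pow, htd]
    field_simp
  have hlt : (k : ℝ) * (r+2*r*t)^d < (k : ℝ) * (2*r)^d := by
    apply mul_lt_mul_of_pos_left _ hk0R
    exact pow_lt_pow_left₀ (by linarith) (by positivity) hd0.ne'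
  linarith
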